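/- Let X₁, X₂, … be independent unit-rate exponential random variables, γ ∈ (0,∞), and β_n = log(n/γ) − log log n. For all x ∈ ℝ and z ∈ ℝ, the sum of tail probabilities over the relevant indices converges to the limiting Poisson intensity of the corner set: Σ_{ i ≥ 1, (1 − i/n)·log n ≥ z } P( i^γ X_i / n^γ − β_n ≥ x ) → e^{−x − γz} as n → ∞. -/

import Mathlib

open MeasureTheory ProbabilityTheory Filter

namespace WETS

lemma log_ge_quad {r : ℝ} (hr : 1/2 ≤ r) : (r-1) - 2*(r-1)^2 ≤ Real.log r := by
  have h0 : (0:ℝ) < r := by linarith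
  have h1 : Real.log r⁻¹ ≤ r⁻¹ - 1 := Real.log_le_sub_one_of_pos (by positivity)
  rw [Real.log_inv] at h1
  have h2 : 1 - r⁻¹ ≤ Real.log r := by linarith
  have h3 : r * r⁻¹ = 1 := mul_inv_cancel₀ (ne_of_gt h0)
  nlinarith [sq_nonneg (r-1), mul_nonneg (sq_nonneg (r-1)) (by linarith : (0:ℝ) ≤ 2*r-1)]

lemma exp_le_quad {w : ℝ} (hw : w ≤ 1/2) : Real.exp w ≤ 1 + w + 2*w^2 := by
  have h1 : 1 - w ≤ Real.exp (-w) := by have := Real.add_one_le_exp (-w); linarith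
  have h2 : (0:ℝ) < 1 - w := by linarith
  have h3 : Real.exp w ≤ (1-w)⁻¹ := by
    have := one_div_le_one_div_of_le h2 h1
    rw [one_div, one_div, Real.exp_neg, inv_inv] at this
    exact this
  have h4 : (1-w)⁻¹ ≤ 1 + w + 2*w^2 := by
    rw [inv_le_iff_one_le_mul₀ h2]
    nlinarith [sq_nonneg w]
  linarith

lemma rpow_lower {γ : ℝ} (hγ : 0 < γ) {r : ℝ} (hr : 0 < r) :
    1 + γ * (1 - r) ≤ r ^ (-γ) := by
  rw [Real.rpow_def_of_pos hr]
  have h1 : Real.log r ≤ r - 1 := Real.log_le_sub_one_of_pos hr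
  calc 1 + γ * (1 - r) ≤ 1 + (Real.log r * -γ) := by nlinarith
    _ ≤ Real.exp (Real.log r * -γ) := by linarith [Real.add_one_le_exp (Real.log r * -γ)]

lemma rpow_upper {γ : ℝ} (hγ : 0 < γ) {s : ℝ} (hs2 : |s| ≤ 1/2) (hs4 : |s| ≤ 1/(4*γ)) :
    (1 - s) ^ (-γ) ≤ 1 + γ * s + (2*γ + 8*γ^2) * s^2 := by
  have habs := abs_le.mp hs2
  have habs4 := abs_le.mp hs4
  have hr : (0:ℝ) < 1 - s := by linarith
  have hlog : (1 - s - 1) - 2*(1 - s - 1)^2 ≤ Real.log (1 - s) := log_ge_quad (by linarith)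
  have hkey : Real.log (1 - s) * (-γ) ≤ γ * s + 2*γ*s^2 := by nlinarith
  rw [Real.rpow_def_of_pos hr]
  have hq : γ * (1/(4*γ)) = 1/4 := by field_simp
  have hsq : s^2 ≤ (1/2) * (1/(4*γ)) := by
    have h := mul_le_mul hs2 hs4 (abs_nonneg s) (by norm_num : (0:ℝ) ≤ 1/2)
    have h2 : |s| * |s| = s^2 := by rw [← abs_mul, abs_mul_self s]; ring
    linarith [h2 ▸ h]
  have hgs : γ * s ≤ 1/4 := by
    have := mul_le_mul_of_nonneg_left habs4.2 hγ.le
    linarith [hq ▸ this]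
  have hgs2 : 2*γ*s^2 ≤ 1/4 := by
    have := mul_le_mul_of_nonneg_left hsq (by positivity : (0:ℝ) ≤ 2*γ)
    have heq : 2*γ*((1/2) * (1/(4*γ))) = 1/4 := by field_simp
    linarith [heq ▸ this]
  have hw : γ * s + 2*γ*s^2 ≤ 1/2 := by linarith
  have h2s : (1+2*s)^2 ≤ 4 := by nlinarith
  have hwsq : (γ*s + 2*γ*s^2)^2 = γ^2*s^2*(1+2*s)^2 := by ring
  have hfin : (γ*s + 2*γ*s^2)^2 ≤ 4*(γ^2*s^2) := by
    rw [hwsq]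
    nlinarith [mul_le_mul_of_nonneg_left h2s (by positivity : (0:ℝ) ≤ γ^2*s^2)]
  calc Real.exp (Real.log (1-s) * (-γ)) ≤ Real.exp (γ*s + 2*γ*s^2) :=
        Real.exp_le_exp.mpr hkey
    _ ≤ 1 + (γ*s + 2*γ*s^2) + 2*(γ*s + 2*γ*s^2)^2 := exp_le_quad hw
    _ ≤ 1 + γ * s + (2*γ + 8*γ^2) * s^2 := by nlinarith

lemma tail_prob {Ω : Type*} [MeasurableSpace Ω] (μ : Measure Ω) [IsProbabilityMeasure μ]
    (Y : Ω → ℝ) (hY : Measurable Y)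
    (hcdf : ∀ x : ℝ, 0 ≤ x → μ {ω | Y ω ≤ x} = ENNReal.ofReal (1 - Real.exp (-x)))
    {t : ℝ} (ht : 0 ≤ t) :
    (μ {ω | t ≤ Y ω}).toReal = Real.exp (-t) := by
  have hmlt : MeasurableSet {ω | Y ω < t} := hY measurableSet_Iio
  have hub : (μ {ω | Y ω < t}).toReal ≤ 1 - Real.exp (-t) := by
    have h1 : μ {ω | Y ω < t} ≤ μ {ω | Y ω ≤ t} :=
      measure_mono (Set.setOf_subset_setOf.mpr (fun ω h => h.le))
    rw [hcdf t ht] at h1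
    calc (μ {ω | Y ω < t}).toReal ≤ (ENNReal.ofReal (1 - Real.exp (-t))).toReal :=
          ENNReal.toReal_mono ENNReal.ofReal_ne_top h1
      _ ≤ 1 - Real.exp (-t) := by
          rw [ENNReal.toReal_ofReal']
          exact max_le le_rfl (by have := Real.exp_le_one_iff.mpr (neg_nonpos.mpr ht); linarith)
  have hlb : 1 - Real.exp (-t) ≤ (μ {ω | Y ω < t}).toReal := by
    rcases eq_or_lt_of_le ht with h0 | h0
    · rw [← h0]
      simp only [neg_zero, Real.exp_zero, sub_self]
      exact ENNReal.toReal_nonneg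
    · have hev : ∀ ε ∈ Set.Ioc (0:ℝ) t, 1 - Real.exp (ε - t) ≤ (μ {ω | Y ω < t}).toReal := by
        intro ε hε
        obtain ⟨hε0, hεt⟩ := hε
        have h1 : μ {ω | Y ω ≤ t - ε} ≤ μ {ω | Y ω < t} :=
          measure_mono (Set.setOf_subset_setOf.mpr (fun ω h => by linarith))
        rw [hcdf (t-ε) (by linarith)] at h1
        have h2 := ENNReal.toReal_mono (measure_ne_top μ _) h1
        rw [ENNReal.toReal_ofReal_eq_iff.mpr] at h2
        · calc 1 - Real.exp (ε - t) = 1 - Real.exp (-(t-ε)) := by ring_nf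
            _ ≤ (μ {ω | Y ω < t}).toReal := h2
        · have : Real.exp (-(t-ε)) ≤ 1 := Real.exp_le_one_iff.mpr (by linarith)
          linarith
      have htd : Tendsto (fun ε : ℝ => 1 - Real.exp (ε - t)) (nhdsWithin 0 (Set.Ioi 0))
          (nhds (1 - Real.exp (-t))) := by
        have hc : Continuous (fun ε : ℝ => 1 - Real.exp (ε - t)) := by
          have : Continuous (fun ε : ℝ => ε - t) := continuous_id.sub continuous_const
          exact continuous_const.sub (Real.continuous_exp.comp this)
        have h := hc.tendsto 0
        simp only [zero_sub] at h
        exact Tendsto.mono_left h nhdsWithin_le_nhds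
      exact le_of_tendsto htd
        (Filter.eventually_of_mem (Ioc_mem_nhdsGT_of_mem ⟨le_rfl, h0⟩) hev)
  have hval : (μ {ω | Y ω < t}).toReal = 1 - Real.exp (-t) := le_antisymm hub hlb
  have hcompl : {ω | t ≤ Y ω} = {ω | Y ω < t}ᶜ := by ext ω; simp [not_lt]
  rw [hcompl, prob_compl_eq_one_sub hmlt,
    ENNReal.toReal_sub_of_le prob_le_one ENNReal.one_ne_top]
  simp [hval]



noncomputable def Lf (γ x : ℝ) (n : ℕ) : ℝ :=
  x + (Real.log ((n:ℝ)/γ) - Real.log (Real.log (n:ℝ)))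

lemma tendsto_log_nat : Tendsto (fun n : ℕ => Real.log n) atTop atTop :=
  Real.tendsto_log_atTop.comp tendsto_natCast_atTop_atTop

lemma tendsto_log_div_nat : Tendsto (fun n : ℕ => Real.log n / n) atTop (nhds 0) :=
  (Real.isLittleO_log_id_atTop.tendsto_div_nhds_zero).comp tendsto_natCast_atTop_atTop

lemma tendsto_loglog : Tendsto (fun n : ℕ => Real.log (Real.log n) / Real.log n) atTop (nhds 0) :=
  (Real.isLittleO_log_id_atTop.tendsto_div_nhds_zero).comp tendsto_log_nat

lemma tendsto_Lf_div_log (γ x : ℝ) (hγ : 0 < γ) :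
    Tendsto (fun n : ℕ => Lf γ x n / Real.log n) atTop (nhds 1) := by
  have h1 : Tendsto (fun n : ℕ => (x - Real.log γ) / Real.log n) atTop (nhds 0) :=
    tendsto_const_nhds.div_atTop tendsto_log_nat
  have h2 : Tendsto (fun n : ℕ => (x - Real.log γ) / Real.log n + 1
      - Real.log (Real.log n) / Real.log n) atTop (nhds (0 + 1 - 0)) :=
    (h1.add tendsto_const_nhds).sub tendsto_loglog
  rw [show (0:ℝ) + 1 - 0 = 1 by norm_num] at h2
  apply h2.congr'
  filter_upwards [eventually_ge_atTop 1, tendsto_log_nat.eventually_ge_atTop 1] with n hn hln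
  have hn0 : (n:ℝ) ≠ 0 := by positivity
  have hl0 : Real.log n ≠ 0 := by linarith
  rw [Lf, Real.log_div hn0 (ne_of_gt hγ)]
  field_simp
  ring

lemma tendsto_Lf_atTop (γ x : ℝ) (hγ : 0 < γ) : Tendsto (Lf γ x) atTop atTop := by
  have h := (tendsto_Lf_div_log γ x hγ).pos_mul_atTop one_pos tendsto_log_nat
  apply h.congr'
  filter_upwards [tendsto_log_nat.eventually_ge_atTop 1] with n hln
  field_simp

lemma exp_neg_Lf (γ x : ℝ) (hγ : 0 < γ) (n : ℕ) (hn : 1 ≤ Real.log n) (hn0 : 0 < (n:ℝ)) :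
    Real.exp (-(Lf γ x n)) = Real.exp (-x) * γ * Real.log n / n := by
  have h1 : -(Lf γ x n) = (-x) + (Real.log (Real.log n) - Real.log ((n:ℝ)/γ)) := by
    rw [Lf]; ring
  rw [h1, Real.exp_add, Real.exp_sub, Real.exp_log (by linarith), Real.exp_log (by positivity)]
  field_simp

lemma tendsto_slope_exp : Tendsto (fun v : ℝ => v / (Real.exp v - 1))
    (nhdsWithin 0 {(0:ℝ)}ᶜ) (nhds 1) := by
  have h := hasDerivAt_iff_tendsto_slope.mp (Real.hasDerivAt_exp 0)
  rw [Real.exp_zero] at h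
  have h2 : Tendsto (fun v : ℝ => (Real.exp v - 1) / v) (nhdsWithin 0 {(0:ℝ)}ᶜ) (nhds 1) := by
    apply h.congr
    intro v
    simp [slope_def_field, Real.exp_zero]
  have h3 := h2.inv₀ one_ne_zero
  rw [inv_one] at h3
  apply h3.congr
  intro v
  rw [inv_div]


lemma tendsto_floor_M (c : ℝ) :
    Tendsto (fun n : ℕ => Real.log n * ((n:ℝ) - (⌊(n:ℝ)*(1 - c/Real.log n)⌋₊ : ℝ)) / n)
      atTop (nhds c) := by
  have hup : Tendsto (fun n : ℕ => c + Real.log n / n) atTop (nhds c) := by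
    have := (tendsto_const_nhds (x := c) (f := atTop (α := ℕ))).add tendsto_log_div_nat
    simpa using this
  apply tendsto_of_tendsto_of_tendsto_of_le_of_le' (tendsto_const_nhds) hup
  · filter_upwards [eventually_ge_atTop 1,
      tendsto_log_nat.eventually_ge_atTop (max 1 (2*|c|))] with n hn hln
    have hl1 : (1:ℝ) ≤ Real.log n := le_trans (le_max_left _ _) hln
    have hlc : 2*|c| ≤ Real.log n := le_trans (le_max_right _ _) hln
    have hn0 : (0:ℝ) < (n:ℝ) := by exact_mod_cast hn
    have habs : c / Real.log n ≤ 1/2 := by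
      rw [div_le_iff₀ (by linarith)]
      have := le_abs_self c
      linarith
    have hr0 : (0:ℝ) ≤ (n:ℝ)*(1 - c/Real.log n) := by nlinarith
    have hfl : (⌊(n:ℝ)*(1 - c/Real.log n)⌋₊ : ℝ) ≤ (n:ℝ)*(1 - c/Real.log n) :=
      Nat.floor_le hr0
    have h2 : Real.log n * ((n:ℝ) - (n:ℝ)*(1 - c/Real.log n)) / n
        ≤ Real.log n * ((n:ℝ) - (⌊(n:ℝ)*(1 - c/Real.log n)⌋₊ : ℝ)) / n := by
      gcongr
    have h3 : Real.log n * ((n:ℝ) - (n:ℝ)*(1 - c/Real.log n)) / n = c := by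
      field_simp
      ring
    linarith
  · filter_upwards [eventually_ge_atTop 1,
      tendsto_log_nat.eventually_ge_atTop (max 1 (2*|c|))] with n hn hln
    have hl1 : (1:ℝ) ≤ Real.log n := le_trans (le_max_left _ _) hln
    have hn0 : (0:ℝ) < (n:ℝ) := by exact_mod_cast hn
    have hfl : (n:ℝ)*(1 - c/Real.log n) - 1 < (⌊(n:ℝ)*(1 - c/Real.log n)⌋₊ : ℝ) :=
      Nat.sub_one_lt_floor _
    have h2 : Real.log n * ((n:ℝ) - (⌊(n:ℝ)*(1 - c/Real.log n)⌋₊ : ℝ)) / n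
        ≤ Real.log n * ((n:ℝ) - ((n:ℝ)*(1 - c/Real.log n) - 1)) / n := by
      gcongr
    have h3 : Real.log n * ((n:ℝ) - ((n:ℝ)*(1 - c/Real.log n) - 1)) / n
        = c + Real.log n / n := by
      field_simp
      ring
    linarith

lemma tendsto_floor_K (T : ℝ) (hT : 0 ≤ T) :
    Tendsto (fun n : ℕ => Real.log n * ((⌊(n:ℝ)*T/Real.log n⌋₊ : ℝ)) / n) atTop (nhds T) := by
  have hlo : Tendsto (fun n : ℕ => T - Real.log n / n) atTop (nhds T) := by
    have := (tendsto_const_nhds (x := T) (f := atTop (α := ℕ))).sub tendsto_log_div_nat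
    simpa using this
  apply tendsto_of_tendsto_of_tendsto_of_le_of_le' hlo (tendsto_const_nhds)
  · filter_upwards [eventually_ge_atTop 1, tendsto_log_nat.eventually_ge_atTop 1] with n hn hln
    have hn0 : (0:ℝ) < (n:ℝ) := by exact_mod_cast hn
    have hfl : (n:ℝ)*T/Real.log n - 1 < (⌊(n:ℝ)*T/Real.log n⌋₊ : ℝ) := Nat.sub_one_lt_floor _
    have h2 : Real.log n * ((n:ℝ)*T/Real.log n - 1) / n
        ≤ Real.log n * ((⌊(n:ℝ)*T/Real.log n⌋₊ : ℝ)) / n := by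
      gcongr
    have h3 : Real.log n * ((n:ℝ)*T/Real.log n - 1) / n = T - Real.log n / n := by
      field_simp
    linarith
  · filter_upwards [eventually_ge_atTop 1, tendsto_log_nat.eventually_ge_atTop 1] with n hn hln
    have hn0 : (0:ℝ) < (n:ℝ) := by exact_mod_cast hn
    have hr0 : (0:ℝ) ≤ (n:ℝ)*T/Real.log n := by positivity
    have hfl : (⌊(n:ℝ)*T/Real.log n⌋₊ : ℝ) ≤ (n:ℝ)*T/Real.log n := Nat.floor_le hr0
    have h2 : Real.log n * ((⌊(n:ℝ)*T/Real.log n⌋₊ : ℝ)) / n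
        ≤ Real.log n * ((n:ℝ)*T/Real.log n) / n := by
      gcongr
    have h3 : Real.log n * ((n:ℝ)*T/Real.log n) / n = T := by
      field_simp
    linarith


lemma tendsto_geomU (γ x : ℝ) (hγ : 0 < γ) (c : ℝ) (e : ℕ → ℕ)
    (he : Tendsto (fun n : ℕ => Real.log n * ((n:ℝ) - (e n : ℝ)) / n) atTop (nhds c)) :
    Tendsto (fun n : ℕ => Real.exp (-(Lf γ x n) * (1+γ)) * Real.exp (Lf γ x n * γ / n) ^ (e n)
      / (Real.exp (Lf γ x n * γ / n) - 1)) atTop (nhds (Real.exp (-x - γ*c))) := by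
  have hL1 := tendsto_Lf_div_log γ x hγ
  have hLtop := tendsto_Lf_atTop γ x hγ
  have hLpos : ∀ᶠ n : ℕ in atTop, 0 < Lf γ x n := hLtop.eventually_gt_atTop 0
  have hlog1 : ∀ᶠ n : ℕ in atTop, 1 ≤ Real.log n := tendsto_log_nat.eventually_ge_atTop 1
  have hn1 : ∀ᶠ n : ℕ in atTop, 1 ≤ n := eventually_ge_atTop 1
  -- u → 0
  have hu0 : Tendsto (fun n : ℕ => Lf γ x n * γ / n) atTop (nhds 0) := by
    have h := (hL1.mul tendsto_log_div_nat).const_mul γ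
    rw [show γ * (1 * 0) = 0 by ring] at h
    apply h.congr'
    filter_upwards [hn1, hlog1] with n hn hln
    have hn0 : (n:ℝ) ≠ 0 := by positivity
    have hl0 : Real.log n ≠ 0 := by linarith
    field_simp
  have hupos : ∀ᶠ n : ℕ in atTop, 0 < Lf γ x n * γ / n := by
    filter_upwards [hLpos, hn1] with n hL hn
    have : (0:ℝ) < n := by exact_mod_cast hn
    positivity
  have huslope : Tendsto (fun n : ℕ => (Lf γ x n * γ / n) / (Real.exp (Lf γ x n * γ / n) - 1))
      atTop (nhds 1) := by
    apply tendsto_slope_exp.comp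
    apply tendsto_nhdsWithin_of_tendsto_nhds_of_eventually_within _ hu0
    filter_upwards [hupos] with n h
    exact (ne_of_gt h)
  have hfac1 : Tendsto (fun n : ℕ => Real.exp (-x) * (Real.log n / Lf γ x n))
      atTop (nhds (Real.exp (-x))) := by
    have h := (hL1.inv₀ one_ne_zero).const_mul (Real.exp (-x))
    rw [inv_one, mul_one] at h
    apply h.congr
    intro n
    rw [inv_div]
  have hfac3 : Tendsto (fun n : ℕ => Real.exp (-γ * ((Lf γ x n / Real.log n)
      * (Real.log n * ((n:ℝ) - (e n : ℝ)) / n)))) atTop (nhds (Real.exp (-γ*c))) := by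
    apply (Real.continuous_exp.tendsto _).comp
    have h := (hL1.mul he).const_mul (-γ)
    rw [show -γ * (1 * c) = -γ*c by ring] at h
    exact h
  have hprod := (hfac1.mul huslope).mul hfac3
  rw [show Real.exp (-x) * 1 * Real.exp (-γ*c) = Real.exp (-x - γ*c) by
    rw [mul_one, ← Real.exp_add]; ring_nf] at hprod
  apply hprod.congr'
  filter_upwards [hLpos, hlog1, hn1] with n hL hln hn
  have hn0 : (0:ℝ) < (n:ℝ) := by exact_mod_cast hn
  have hl0 : Real.log n ≠ 0 := by linarith
  have hL0 : Lf γ x n ≠ 0 := ne_of_gt hL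
  have hu : 0 < Lf γ x n * γ / n := by positivity
  have hene : Real.exp (Lf γ x n * γ / n) - 1 ≠ 0 := by
    have := Real.one_lt_exp_iff.mpr hu
    linarith
  have h1 : Real.exp (Lf γ x n * γ / n) ^ (e n) = Real.exp ((e n : ℝ) * (Lf γ x n * γ / n)) :=
    (Real.exp_nat_mul _ _).symm
  have h2 : -γ * ((Lf γ x n / Real.log n) * (Real.log n * ((n:ℝ) - (e n : ℝ)) / n))
      = -(γ * Lf γ x n) * ((n:ℝ) - (e n : ℝ)) / n := by
    field_simp
  have hsum : -(Lf γ x n)*(1+γ) + (e n : ℝ)*(Lf γ x n * γ / n)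
      = -(Lf γ x n) + -(γ * Lf γ x n) * ((n:ℝ) - (e n : ℝ)) / n := by
    field_simp
    ring
  have h4 : Real.exp (-(Lf γ x n)) = Real.exp (-x) * γ * Real.log n / n :=
    exp_neg_Lf γ x hγ n hln hn0
  rw [h2, h1, ← Real.exp_add, hsum, Real.exp_add, h4]
  field_simp


noncomputable def Mz (z : ℝ) (n : ℕ) : ℕ := ⌊(n:ℝ)*(1 - z/Real.log n)⌋₊

noncomputable def Kt (T : ℝ) (n : ℕ) : ℕ := ⌊(n:ℝ)*T/Real.log n⌋₊

noncomputable def qf (γ x : ℝ) (n : ℕ) : ℝ := Real.exp (Lf γ x n * γ / n)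

noncomputable def gf (γ x : ℝ) (n i : ℕ) : ℝ :=
  Real.exp (-(Lf γ x n * ((i:ℝ)/(n:ℝ)) ^ (-γ)))

lemma tendsto_U (γ x z : ℝ) (hγ : 0 < γ) :
    Tendsto (fun n : ℕ => Real.exp (-(Lf γ x n)*(1+γ)) * qf γ x n ^ (Mz z n + 1)
      / (qf γ x n - 1)) atTop (nhds (Real.exp (-x - γ*z))) := by
  apply tendsto_geomU γ x hγ z (fun n => Mz z n + 1)
  have h := (tendsto_floor_M z).sub tendsto_log_div_nat
  rw [sub_zero] at h
  apply h.congr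
  intro n
  simp only [Mz]
  push_cast
  ring

lemma tendsto_V (γ x T : ℝ) (hγ : 0 < γ) (hT : 1 ≤ T) :
    Tendsto (fun n : ℕ => Real.exp (-(Lf γ x n)*(1+γ)) * qf γ x n ^ (n - Kt T n)
      / (qf γ x n - 1)) atTop (nhds (Real.exp (-x - γ*T))) := by
  apply tendsto_geomU γ x hγ T (fun n => n - Kt T n)
  apply (tendsto_floor_K T (by linarith)).congr'
  filter_upwards [tendsto_log_nat.eventually_ge_atTop (2*T), eventually_ge_atTop 1]
    with n hl hn
  have hn0 : (0:ℝ) < n := by exact_mod_cast hn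
  have hl0 : (0:ℝ) < Real.log n := by linarith
  have hKle : (Kt T n : ℝ) ≤ (n:ℝ) := by
    have h1 : (Kt T n : ℝ) ≤ (n:ℝ)*T/Real.log n := Nat.floor_le (by positivity)
    have h2 : (n:ℝ)*T/Real.log n ≤ (n:ℝ) := by
      rw [div_le_iff₀ hl0]
      nlinarith
    linarith
  have hKn : Kt T n ≤ n := by exact_mod_cast hKle
  rw [Nat.cast_sub hKn]
  simp only [Kt]
  ring

lemma tendsto_eta (γ x T : ℝ) (hγ : 0 < γ) :
    Tendsto (fun n : ℕ => Real.exp (-(Lf γ x n) * (2*γ+8*γ^2) * (T/Real.log n)^2))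
      atTop (nhds 1) := by
  have hinv : Tendsto (fun n : ℕ => (Real.log n)⁻¹) atTop (nhds 0) :=
    tendsto_inv_atTop_zero.comp tendsto_log_nat
  have hinner : Tendsto (fun n : ℕ => (-(2*γ+8*γ^2)*T^2) * ((Lf γ x n / Real.log n)
      * (Real.log n)⁻¹)) atTop (nhds 0) := by
    have h := ((tendsto_Lf_div_log γ x hγ).mul hinv).const_mul (-(2*γ+8*γ^2)*T^2)
    rw [show (-(2*γ+8*γ^2)*T^2) * (1 * 0) = 0 by ring] at h
    exact h
  have h := (Real.continuous_exp.tendsto 0).comp hinner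
  rw [Real.exp_zero] at h
  apply h.congr'
  filter_upwards [tendsto_log_nat.eventually_ge_atTop 1] with n hl
  have hl0 : Real.log n ≠ 0 := by linarith
  simp only [Function.comp]
  field_simp


lemma sum_upper (γ x z : ℝ) (hγ : 0 < γ) : ∀ᶠ n : ℕ in atTop,
    ∑ i ∈ Finset.Icc 1 (Mz z n), gf γ x n i
      ≤ Real.exp (-(Lf γ x n)*(1+γ)) * qf γ x n ^ (Mz z n + 1) / (qf γ x n - 1) := by
  filter_upwards [(tendsto_Lf_atTop γ x hγ).eventually_gt_atTop 0, eventually_ge_atTop 1]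
    with n hL hn
  have hn0 : (0:ℝ) < n := by exact_mod_cast hn
  have hu : 0 < Lf γ x n * γ / n := by positivity
  have hq1 : 1 < qf γ x n := by rw [qf]; exact Real.one_lt_exp_iff.mpr hu
  have hq0 : (0:ℝ) < qf γ x n := lt_trans one_pos hq1
  have hterm : ∀ i ∈ Finset.Icc 1 (Mz z n),
      gf γ x n i ≤ Real.exp (-(Lf γ x n)*(1+γ)) * qf γ x n ^ i := by
    intro i hi
    obtain ⟨hi1, _⟩ := Finset.mem_Icc.mp hi
    have hi0 : (0:ℝ) < (i:ℝ) := by exact_mod_cast hi1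
    have hin : (0:ℝ) < (i:ℝ)/n := by positivity
    have hlow := rpow_lower hγ hin
    have hmul := mul_le_mul_of_nonneg_left hlow hL.le
    have hid : Lf γ x n * (1 + γ*(1 - (i:ℝ)/n))
        = Lf γ x n*(1+γ) - (i:ℝ)*(Lf γ x n*γ/n) := by
      field_simp
      ring
    have hexp : -(Lf γ x n * (((i:ℝ)/n) ^ (-γ)))
        ≤ -(Lf γ x n)*(1+γ) + (i:ℝ)*(Lf γ x n*γ/n) := by linarith
    calc gf γ x n i = Real.exp (-(Lf γ x n * (((i:ℝ)/n) ^ (-γ)))) := by rw [gf]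
      _ ≤ Real.exp (-(Lf γ x n)*(1+γ) + (i:ℝ)*(Lf γ x n*γ/n)) := Real.exp_le_exp.mpr hexp
      _ = Real.exp (-(Lf γ x n)*(1+γ)) * qf γ x n ^ i := by
          rw [Real.exp_add, Real.exp_nat_mul, qf]
  calc ∑ i ∈ Finset.Icc 1 (Mz z n), gf γ x n i
      ≤ ∑ i ∈ Finset.Icc 1 (Mz z n), Real.exp (-(Lf γ x n)*(1+γ)) * qf γ x n ^ i :=
        Finset.sum_le_sum hterm
    _ = Real.exp (-(Lf γ x n)*(1+γ)) * ∑ i ∈ Finset.Icc 1 (Mz z n), qf γ x n ^ i := by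
        rw [Finset.mul_sum]
    _ ≤ Real.exp (-(Lf γ x n)*(1+γ)) * ∑ i ∈ Finset.range (Mz z n + 1), qf γ x n ^ i := by
        apply mul_le_mul_of_nonneg_left _ (Real.exp_nonneg _)
        apply Finset.sum_le_sum_of_subset_of_nonneg
        · intro i hi
          rw [Finset.mem_range]
          exact Nat.lt_succ_of_le (Finset.mem_Icc.mp hi).2
        · intro i _ _
          exact pow_nonneg hq0.le i
    _ = Real.exp (-(Lf γ x n)*(1+γ)) * ((qf γ x n ^ (Mz z n + 1) - 1)/(qf γ x n - 1)) := by
        rw [geom_sum_eq hq1.ne']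
    _ ≤ Real.exp (-(Lf γ x n)*(1+γ)) * (qf γ x n ^ (Mz z n + 1)/(qf γ x n - 1)) := by
        apply mul_le_mul_of_nonneg_left _ (Real.exp_nonneg _)
        gcongr
        · linarith
    _ = Real.exp (-(Lf γ x n)*(1+γ)) * qf γ x n ^ (Mz z n + 1) / (qf γ x n - 1) := by
        rw [mul_div_assoc]


set_option maxHeartbeats 1000000 in
lemma sum_lower (γ x z T : ℝ) (hγ : 0 < γ) (hT : |z| + 1 ≤ T) : ∀ᶠ n : ℕ in atTop,
    Real.exp (-(Lf γ x n) * (2*γ+8*γ^2) * (T/Real.log n)^2)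
      * (Real.exp (-(Lf γ x n)*(1+γ)) * (qf γ x n ^ (Mz z n + 1) - qf γ x n ^ (n - Kt T n))
        / (qf γ x n - 1))
    ≤ ∑ i ∈ Finset.Icc 1 (Mz z n), gf γ x n i := by
  have hTpos : 0 < T := by have := abs_nonneg z; linarith
  filter_upwards [(tendsto_Lf_atTop γ x hγ).eventually_gt_atTop 0, eventually_ge_atTop 1,
    tendsto_log_nat.eventually_ge_atTop (2*T), tendsto_log_nat.eventually_ge_atTop (4*γ*T)]
    with n hL hn hl2T hl4T
  have hn0 : (0:ℝ) < n := by exact_mod_cast hn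
  have hl0 : (0:ℝ) < Real.log n := by linarith
  have hu : 0 < Lf γ x n * γ / n := by positivity
  have hq1 : 1 < qf γ x n := by rw [qf]; exact Real.one_lt_exp_iff.mpr hu
  have hq0 : (0:ℝ) < qf γ x n := lt_trans one_pos hq1
  -- K facts
  have hKup : ((Kt T n : ℕ):ℝ) ≤ (n:ℝ)*T/Real.log n := by
    simp only [Kt]; exact Nat.floor_le (by positivity)
  have hKlow : (n:ℝ)*T/Real.log n - 1 < ((Kt T n : ℕ):ℝ) := by
    simp only [Kt]; exact Nat.sub_one_lt_floor _
  have hKhalf : ((Kt T n : ℕ):ℝ) ≤ (n:ℝ)/2 := by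
    have h2 : (n:ℝ)*T/Real.log n ≤ n/2 := by
      rw [div_le_div_iff₀ hl0 two_pos]
      linarith [mul_le_mul_of_nonneg_left hl2T hn0.le]
    linarith
  have hKn : Kt T n ≤ n := by
    have : ((Kt T n : ℕ):ℝ) ≤ (n:ℝ) := by linarith
    exact_mod_cast this
  have hKlt : Kt T n < n := by
    have : ((Kt T n : ℕ):ℝ) < (n:ℝ) := by linarith
    exact_mod_cast this
  have hnK1 : 1 ≤ n - Kt T n := by omega
  have hcast : ((n - Kt T n : ℕ):ℝ) = (n:ℝ) - Kt T n := by
    push_cast [Nat.cast_sub hKn]; ring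
  -- M facts
  have hzdiv : z/Real.log n ≤ 1/2 := by
    rw [div_le_iff₀ hl0]
    linarith [le_abs_self z]
  have hMr0 : (0:ℝ) ≤ (n:ℝ)*(1 - z/Real.log n) := by
    have := mul_le_mul_of_nonneg_left (by linarith : (1:ℝ)/2 ≤ 1 - z/Real.log n) hn0.le
    linarith
  have hMup : ((Mz z n : ℕ):ℝ) ≤ (n:ℝ)*(1 - z/Real.log n) := by
    simp only [Mz]; exact Nat.floor_le hMr0
  have hMlow : (n:ℝ)*(1 - z/Real.log n) - 1 < ((Mz z n : ℕ):ℝ) := by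
    simp only [Mz]; exact Nat.sub_one_lt_floor _
  have hnKM : n - Kt T n ≤ Mz z n + 1 := by
    have h1 : (1:ℝ) ≤ (n:ℝ)*(T - z)/Real.log n := by
      rw [le_div_iff₀ hl0]
      have hlogn : Real.log n ≤ (n:ℝ) := by
        have := Real.log_le_sub_one_of_pos hn0
        linarith
      have h1z : (1:ℝ) ≤ T - z := by linarith [le_abs_self z]
      have := mul_le_mul_of_nonneg_left h1z hn0.le
      linarith
    have h3 : (n:ℝ)*(1 - z/Real.log n) = n - n*z/Real.log n := by ring
    have h2 : (n:ℝ)*T/Real.log n = n*z/Real.log n + n*(T-z)/Real.log n := by ring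
    have hr : (n:ℝ) - Kt T n ≤ ((Mz z n : ℕ):ℝ) + 1 := by linarith
    have hr2 : ((n - Kt T n : ℕ):ℝ) ≤ (((Mz z n + 1) : ℕ):ℝ) := by
      rw [hcast]; push_cast; linarith
    exact_mod_cast hr2
  -- termwise lower bound
  have hterm : ∀ i ∈ Finset.Icc (n - Kt T n) (Mz z n),
      Real.exp (-(Lf γ x n) * (2*γ+8*γ^2) * (T/Real.log n)^2)
        * (Real.exp (-(Lf γ x n)*(1+γ)) * qf γ x n ^ i) ≤ gf γ x n i := by
    intro i hi
    obtain ⟨hi1, hi2⟩ := Finset.mem_Icc.mp hi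
    have hi1' : ((n - Kt T n : ℕ):ℝ) ≤ (i:ℝ) := Nat.cast_le.mpr hi1
    rw [hcast] at hi1'
    have hi2' : (i:ℝ) ≤ ((Mz z n : ℕ):ℝ) := Nat.cast_le.mpr hi2
    have hipos : (0:ℝ) < (i:ℝ) := by
      have h1 : 1 ≤ i := le_trans hnK1 hi1
      exact_mod_cast h1
    set s : ℝ := 1 - (i:ℝ)/n with hs
    clear_value s
    have hKl : ((Kt T n : ℕ):ℝ)*Real.log n ≤ (n:ℝ)*T := (le_div_iff₀ hl0).mp hKup
    have hseq : s = ((n:ℝ) - i)/n := by rw [hs]; field_simp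
    have hs_up : s ≤ T/Real.log n := by
      rw [hseq, div_le_div_iff₀ hn0 hl0]
      have hni : (n:ℝ) - i ≤ ((Kt T n : ℕ):ℝ) := by linarith
      linarith [mul_le_mul_of_nonneg_right hni hl0.le, hKl]
    have hs_lo : -(T/Real.log n) ≤ s := by
      have h7 : (i:ℝ)/n ≤ 1 - z/Real.log n := by
        rw [div_le_iff₀ hn0, mul_comm]
        linarith
      have h8 : z/Real.log n ≤ s := by rw [hs]; linarith
      have h9 : -(T/Real.log n) ≤ z/Real.log n := by
        rw [← neg_div, div_le_div_iff₀ hl0 hl0]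
        have := mul_le_mul_of_nonneg_right (show -T ≤ z by linarith [neg_abs_le z]) hl0.le
        linarith
      linarith
    have habs : |s| ≤ T/Real.log n := abs_le.mpr ⟨hs_lo, hs_up⟩
    have hTl2 : T/Real.log n ≤ 1/2 := by rw [div_le_iff₀ hl0]; linarith
    have hTl4 : T/Real.log n ≤ 1/(4*γ) := by
      rw [div_le_div_iff₀ hl0 (by positivity)]
      linarith
    have hs2 : |s| ≤ 1/2 := le_trans habs hTl2
    have hs4 : |s| ≤ 1/(4*γ) := le_trans habs hTl4
    have hrq := rpow_upper hγ hs2 hs4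
    have hro : ((i:ℝ)/n) = 1 - s := by rw [hs]; ring
    have hssq : s^2 ≤ (T/Real.log n)^2 := by
      rw [← sq_abs s]
      exact pow_le_pow_left₀ (abs_nonneg s) habs 2
    have hmul := mul_le_mul_of_nonneg_left hrq hL.le
    have hCnn : (0:ℝ) ≤ Lf γ x n * (2*γ+8*γ^2) := mul_nonneg hL.le (by positivity)
    have hCs : Lf γ x n * (2*γ+8*γ^2) * s^2 ≤ Lf γ x n * (2*γ+8*γ^2) * (T/Real.log n)^2 :=
      mul_le_mul_of_nonneg_left hssq hCnn
    have hid : Lf γ x n * (1 + γ*s + (2*γ+8*γ^2)*s^2)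
        = Lf γ x n*(1+γ) - (i:ℝ)*(Lf γ x n*γ/n) + Lf γ x n*(2*γ+8*γ^2)*s^2 := by
      rw [hs]; field_simp; ring
    have hexp : -(Lf γ x n) * (2*γ+8*γ^2) * (T/Real.log n)^2
          + (-(Lf γ x n)*(1+γ) + (i:ℝ)*(Lf γ x n*γ/n))
        ≤ -(Lf γ x n * (((i:ℝ)/n) ^ (-γ))) := by
      rw [hro]
      linarith [hmul, hid, hCs]
    calc Real.exp (-(Lf γ x n) * (2*γ+8*γ^2) * (T/Real.log n)^2)
          * (Real.exp (-(Lf γ x n)*(1+γ)) * qf γ x n ^ i)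
        = Real.exp (-(Lf γ x n) * (2*γ+8*γ^2) * (T/Real.log n)^2
            + (-(Lf γ x n)*(1+γ) + (i:ℝ)*(Lf γ x n*γ/n))) := by
          rw [qf, ← Real.exp_nat_mul, ← Real.exp_add, ← Real.exp_add]
      _ ≤ Real.exp (-(Lf γ x n * (((i:ℝ)/n) ^ (-γ)))) := Real.exp_le_exp.mpr hexp
      _ = gf γ x n i := by rw [gf]
  -- sum chain
  have hsum1 : ∑ i ∈ Finset.Icc (n - Kt T n) (Mz z n), gf γ x n i
      ≤ ∑ i ∈ Finset.Icc 1 (Mz z n), gf γ x n i := by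
    apply Finset.sum_le_sum_of_subset_of_nonneg (Finset.Icc_subset_Icc hnK1 le_rfl)
    intro i _ _
    simp only [gf]
    positivity
  have hsum2 := Finset.sum_le_sum hterm
  have hsum3 : ∑ i ∈ Finset.Icc (n - Kt T n) (Mz z n),
      Real.exp (-(Lf γ x n) * (2*γ+8*γ^2) * (T/Real.log n)^2)
        * (Real.exp (-(Lf γ x n)*(1+γ)) * qf γ x n ^ i)
      = Real.exp (-(Lf γ x n) * (2*γ+8*γ^2) * (T/Real.log n)^2)
        * (Real.exp (-(Lf γ x n)*(1+γ))
          * ((qf γ x n ^ (Mz z n + 1) - qf γ x n ^ (n - Kt T n)) / (qf γ x n - 1))) := by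
    rw [← Finset.Ico_add_one_right_eq_Icc, ← geom_sum_Ico hq1.ne' hnKM, Finset.mul_sum, Finset.mul_sum]
  have hfin : Real.exp (-(Lf γ x n) * (2*γ+8*γ^2) * (T/Real.log n)^2)
      * (Real.exp (-(Lf γ x n)*(1+γ)) * (qf γ x n ^ (Mz z n + 1) - qf γ x n ^ (n - Kt T n))
        / (qf γ x n - 1))
      = Real.exp (-(Lf γ x n) * (2*γ+8*γ^2) * (T/Real.log n)^2)
        * (Real.exp (-(Lf γ x n)*(1+γ))
          * ((qf γ x n ^ (Mz z n + 1) - qf γ x n ^ (n - Kt T n)) / (qf γ x n - 1))) := by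
    ring
  rw [hfin, ← hsum3]
  exact le_trans hsum2 hsum1


end WETS

open WETS in
/-- For i.i.d. unit exponentials `X_i` and `γ > 0`, the sum of the
tail probabilities `P(i^γ X_i/n^γ - β_n ≥ x)` over indices `i ≥ 1` with
`(1 - i/n) log n ≥ z` converges to `e^{-x - γz}`. -/
theorem weighted_exponential_tail_sum
    {Ω : Type*} [MeasurableSpace Ω] (μ : Measure Ω) [IsProbabilityMeasure μ]
    (X : ℕ → Ω → ℝ)
    (hXmeas : ∀ i, Measurable (X i))
    (hXindep : iIndepFun X μ)
    (hXexp : ∀ i, ∀ x : ℝ, 0 ≤ x →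
      μ {ω | X i ω ≤ x} = ENNReal.ofReal (1 - Real.exp (-x)))
    (γ : ℝ) (hγ : 0 < γ)
    (β : ℕ → ℝ)
    (hβ : ∀ n, β n = Real.log ((n : ℝ) / γ) - Real.log (Real.log (n : ℝ))) :
    ∀ x z : ℝ,
      Tendsto
        (fun n : ℕ =>
          ∑' i : ℕ,
            Set.indicator
              {i : ℕ | 1 ≤ i ∧ z ≤ (1 - (i : ℝ) / (n : ℝ)) * Real.log (n : ℝ)}
              (fun i =>
                (μ {ω | x ≤ (i : ℝ) ^ γ * X i ω / (n : ℝ) ^ γ - β n}).toReal) i)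
        atTop
        (nhds (Real.exp (-x - γ * z))) := by
  intro x z
  -- identify the sum with a finite sum of explicit exponentials
  have hS : ∀ᶠ n : ℕ in atTop,
      (∑' i : ℕ,
        Set.indicator
          {i : ℕ | 1 ≤ i ∧ z ≤ (1 - (i : ℝ) / (n : ℝ)) * Real.log (n : ℝ)}
          (fun i =>
            (μ {ω | x ≤ (i : ℝ) ^ γ * X i ω / (n : ℝ) ^ γ - β n}).toReal) i)
      = ∑ i ∈ Finset.Icc 1 (Mz z n), gf γ x n i := by
    filter_upwards [tendsto_log_nat.eventually_ge_atTop (max 1 (2*|z|)),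
      eventually_ge_atTop 1, (tendsto_Lf_atTop γ x hγ).eventually_gt_atTop 0]
      with n hln hn hL
    have hl1 : (1:ℝ) ≤ Real.log n := le_trans (le_max_left _ _) hln
    have hlz : 2*|z| ≤ Real.log n := le_trans (le_max_right _ _) hln
    have hn0 : (0:ℝ) < (n:ℝ) := by exact_mod_cast hn
    have hl0 : (0:ℝ) < Real.log n := by linarith
    have hzdiv : z/Real.log n ≤ 1/2 := by
      rw [div_le_iff₀ hl0]
      linarith [le_abs_self z]
    have hMr0 : (0:ℝ) ≤ (n:ℝ)*(1 - z/Real.log n) := by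
      have := mul_le_mul_of_nonneg_left (by linarith : (1:ℝ)/2 ≤ 1 - z/Real.log n) hn0.le
      linarith
    have hsetEq : {i : ℕ | 1 ≤ i ∧ z ≤ (1 - (i : ℝ) / (n : ℝ)) * Real.log (n : ℝ)}
        = ↑(Finset.Icc 1 (Mz z n)) := by
      ext i
      simp only [Finset.coe_Icc, Set.mem_Icc, Set.mem_setOf_eq]
      refine and_congr_right fun _ => ?_
      constructor
      · intro h
        have h1 : z/Real.log n ≤ 1 - (i:ℝ)/n := (div_le_iff₀ hl0).mpr h
        have h2 : (i:ℝ)/n ≤ 1 - z/Real.log n := by linarith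
        have h3 : (i:ℝ) ≤ (n:ℝ)*(1 - z/Real.log n) := by
          rw [div_le_iff₀ hn0, mul_comm] at h2
          exact h2
        exact Nat.le_floor h3
      · intro h
        have h1 : (i:ℝ) ≤ (n:ℝ)*(1 - z/Real.log n) := by
          calc (i:ℝ) ≤ ((Mz z n : ℕ):ℝ) := Nat.cast_le.mpr h
            _ ≤ (n:ℝ)*(1 - z/Real.log n) := by simp only [Mz]; exact Nat.floor_le hMr0
        have h2 : (i:ℝ)/n ≤ 1 - z/Real.log n := by
          rw [div_le_iff₀ hn0, mul_comm]
          exact h1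
        have h3 : z/Real.log n ≤ 1 - (i:ℝ)/n := by linarith
        calc z = (z/Real.log n)*Real.log n := by field_simp
          _ ≤ (1 - (i:ℝ)/n)*Real.log n := mul_le_mul_of_nonneg_right h3 hl0.le
    rw [hsetEq, ← sum_eq_tsum_indicator]
    apply Finset.sum_congr rfl
    intro i hi
    obtain ⟨hi1, _⟩ := Finset.mem_Icc.mp hi
    have hi0 : (0:ℝ) < (i:ℝ) := by exact_mod_cast hi1
    have ht0 : 0 ≤ Lf γ x n * (((i:ℝ)/(n:ℝ)) ^ (-γ)) :=
      mul_nonneg hL.le (Real.rpow_nonneg (by positivity) _)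
    have hLβ : x + β n = Lf γ x n := by rw [hβ n, Lf]
    have hsetev : {ω | x ≤ (i:ℝ)^γ * X i ω / (n:ℝ)^γ - β n}
        = {ω | Lf γ x n * (((i:ℝ)/(n:ℝ)) ^ (-γ)) ≤ X i ω} := by
      ext ω
      simp only [Set.mem_setOf_eq]
      have hipow : (0:ℝ) < (i:ℝ)^γ := Real.rpow_pos_of_pos hi0 γ
      have hnpow : (0:ℝ) < (n:ℝ)^γ := Real.rpow_pos_of_pos hn0 γ
      have hrpoweq : ((i:ℝ)/(n:ℝ)) ^ (-γ) = (n:ℝ)^γ/(i:ℝ)^γ := by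
        rw [Real.rpow_neg (by positivity), Real.div_rpow hi0.le hn0.le, inv_div]
      rw [hrpoweq]
      constructor
      · intro h
        have h2 : Lf γ x n ≤ (i:ℝ)^γ * X i ω / (n:ℝ)^γ := by rw [← hLβ]; linarith
        rw [le_div_iff₀ hnpow] at h2
        rw [← mul_div_assoc, div_le_iff₀ hipow]
        rw [mul_comm ((i:ℝ)^γ) (X i ω)] at h2
        exact h2
      · intro h
        rw [← mul_div_assoc, div_le_iff₀ hipow] at h
        have h2 : Lf γ x n ≤ (i:ℝ)^γ * X i ω / (n:ℝ)^γ := by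
          rw [le_div_iff₀ hnpow, mul_comm ((i:ℝ)^γ) (X i ω)]
          exact h
        rw [← hLβ] at h2
        linarith
    rw [hsetev, gf]
    exact tail_prob μ (X i) (hXmeas i) (hXexp i) ht0
  rw [Metric.tendsto_nhds]
  intro ε hε
  set T := max (|z| + 1) ((-x - Real.log (ε/2))/γ + 1) with hTdef
  have hT1 : |z| + 1 ≤ T := le_max_left _ _
  have hT2 : (-x - Real.log (ε/2))/γ + 1 ≤ T := le_max_right _ _
  have hTz1 : 1 ≤ T := by have := abs_nonneg z; linarith
  have hTe : Real.exp (-x - γ*T) < ε/2 := by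
    have h2 : γ*((-x - Real.log (ε/2))/γ + 1) ≤ γ*T := mul_le_mul_of_nonneg_left hT2 hγ.le
    have h3 : γ*((-x - Real.log (ε/2))/γ + 1) = -x - Real.log (ε/2) + γ := by field_simp
    have h4 : -x - γ*T ≤ Real.log (ε/2) - γ := by linarith
    calc Real.exp (-x - γ*T) ≤ Real.exp (Real.log (ε/2) - γ) := Real.exp_le_exp.mpr h4
      _ < Real.exp (Real.log (ε/2)) := Real.exp_lt_exp.mpr (by linarith)
      _ = ε/2 := Real.exp_log (by positivity)
  have hU := tendsto_U γ x z hγ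
  have hV := tendsto_V γ x T hγ hTz1
  have hEta := tendsto_eta γ x T hγ
  have hLo : Tendsto (fun n : ℕ => Real.exp (-(Lf γ x n) * (2*γ+8*γ^2) * (T/Real.log n)^2)
      * (Real.exp (-(Lf γ x n)*(1+γ)) * (qf γ x n ^ (Mz z n + 1) - qf γ x n ^ (n - Kt T n))
        / (qf γ x n - 1))) atTop
      (nhds (1 * (Real.exp (-x - γ*z) - Real.exp (-x - γ*T)))) := by
    have h := hEta.mul (hU.sub hV)
    apply h.congr
    intro n
    ring
  have hUev := Metric.tendsto_nhds.mp hU (ε/2) (by linarith)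
  have hLoev := Metric.tendsto_nhds.mp hLo (ε/2) (by linarith)
  filter_upwards [hS, sum_upper γ x z hγ, sum_lower γ x z T hγ hT1, hUev, hLoev]
    with n hs hub hlb hd1 hd2
  rw [Real.dist_eq] at hd1 hd2 ⊢
  rw [hs]
  rw [abs_lt] at hd1 hd2
  obtain ⟨hd1a, hd1b⟩ := hd1
  obtain ⟨hd2a, hd2b⟩ := hd2
  rw [abs_lt]
  have hE0 : 0 < Real.exp (-x - γ*T) := Real.exp_pos _
  constructor
  · linarith
  · linarith
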